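/- The semigroup is locally bi-equicontinuous on F_α with respect to the seminorms p_{F_α}: if (x_n) is a sequence in F_α with sup_n ‖x_n‖_{F_α} < ∞ and p_{F_α}(x_n) → 0 for every p ∈ 𝒫, then for every t₀ > 0 and every p ∈ 𝒫 one has sup_{t∈[0,t₀]} p_{F_α}(T(t)x_n) → 0 as n → ∞. -/
import Mathlib


open scoped Topology

/-- The Favard norm `‖z‖_{F_α} = sup_{t>0} t^{−α}‖T(t)z − z‖` (as a supremum in `ℝ`). -/
noncomputable def favNorm {X : Type*} [NormedAddCommGroup X] [NormedSpace ℝ X]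
    (T : ℝ → X →L[ℝ] X) (α : ℝ) (z : X) : ℝ :=
  sSup ((fun t : ℝ => ‖T t z - z‖ / t ^ α) '' Set.Ioi 0)

/-- Membership in the Favard space `F_α`. -/
def memFav {X : Type*} [NormedAddCommGroup X] [NormedSpace ℝ X]
    (T : ℝ → X →L[ℝ] X) (α : ℝ) (z : X) : Prop :=
  BddAbove ((fun t : ℝ => ‖T t z - z‖ / t ^ α) '' Set.Ioi 0)

/-- The seminorm `p_{F_α}(z) = sup_{t>0} t^{−α} p(T(t)z − z)`. -/
noncomputable def pFav {X : Type*} [NormedAddCommGroup X] [NormedSpace ℝ X]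
    (T : ℝ → X →L[ℝ] X) (α : ℝ) (p : Seminorm ℝ X) (z : X) : ℝ :=
  sSup ((fun t : ℝ => p (T t z - z) / t ^ α) '' Set.Ioi 0)

/-- Membership in the space `X_α ⊆ F_α`. -/
def memX {X : Type*} [NormedAddCommGroup X] [NormedSpace ℝ X]
    (P : Set (Seminorm ℝ X)) (T : ℝ → X →L[ℝ] X) (α : ℝ) (z : X) : Prop :=
  memFav T α z ∧
    ∀ p ∈ P, Filter.Tendsto (fun t : ℝ => p (T t z - z) / t ^ α)
      (nhdsWithin 0 (Set.Ioi 0)) (nhds 0)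


lemma p_le_norm' {X : Type*} [NormedAddCommGroup X] [NormedSpace ℝ X]
    (P : Set (Seminorm ℝ X))
    (hnorm : ∀ x : X, ‖x‖ = sSup {r : ℝ | ∃ p ∈ P, r = p x})
    {p : Seminorm ℝ X} (hp : p ∈ P) (x : X) : p x ≤ ‖x‖ := by
  by_cases hb : BddAbove {r : ℝ | ∃ q ∈ P, r = q x}
  · rw [hnorm x]
    exact le_csSup hb ⟨p, hp, rfl⟩
  · have h0 : ‖x‖ = 0 := by rw [hnorm x, Real.sSup_of_not_bddAbove hb]
    have hx : x = 0 := norm_eq_zero.mp h0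
    simp [hx]

/-- The semigroup is locally bi-equicontinuous on `F_α` for the
seminorms `p_{F_α}`: if `(x_n) ⊆ F_α` is `‖·‖_{F_α}`-bounded and `p_{F_α}(x_n) → 0`
for every `p ∈ 𝒫`, then `sup_{t∈[0,t₀]} p_{F_α}(T(t)x_n) → 0` for every `t₀ > 0`, `p ∈ 𝒫`. -/
theorem statement13
    {X : Type*} [NormedAddCommGroup X] [NormedSpace ℝ X] [CompleteSpace X]
    (P : Set (Seminorm ℝ X))
    (hnorm : ∀ x : X, ‖x‖ = sSup {r : ℝ | ∃ p ∈ P, r = p x})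
    (hcomplete : ∀ (u : ℕ → X) (C : ℝ), (∀ n, ‖u n‖ ≤ C) →
      (∀ p ∈ P, ∀ ε > (0:ℝ), ∃ N : ℕ, ∀ m ≥ N, ∀ n ≥ N, p (u m - u n) < ε) →
      ∃ x : X, ∀ p ∈ P, Filter.Tendsto (fun n => p (u n - x)) Filter.atTop (𝓝 0))
    (T : ℝ → X →L[ℝ] X) (hT0 : T 0 = 1)
    (hTsg : ∀ s t : ℝ, 0 ≤ s → 0 ≤ t → T (t + s) = (T t).comp (T s))
    (M ω : ℝ) (hM : 1 ≤ M) (hω : ω < 0)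
    (hgrowth : ∀ t : ℝ, 0 ≤ t → ‖T t‖ ≤ M * Real.exp (ω * t))
    (horbit : ∀ x : X, ∀ p ∈ P, ∀ t₀ : ℝ, 0 ≤ t₀ →
      Filter.Tendsto (fun t : ℝ => p (T t x - T t₀ x)) (𝓝[Set.Ici 0] t₀) (𝓝 0))
    (hbieq : ∀ (u : ℕ → X) (C : ℝ), (∀ n, ‖u n‖ ≤ C) →
      (∀ p ∈ P, Filter.Tendsto (fun n => p (u n)) Filter.atTop (𝓝 0)) →
      ∀ t₀ > (0:ℝ), ∀ p ∈ P, ∀ ε > (0:ℝ), ∃ N : ℕ, ∀ n ≥ N, ∀ s ∈ Set.Icc (0:ℝ) t₀,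
        p (T s (u n)) < ε)
    (α : ℝ) (hα : α ∈ Set.Ioo (0:ℝ) 1)
    (u : ℕ → X) (huF : ∀ n, memFav T α (u n))
    (C : ℝ) (hC : ∀ n, favNorm T α (u n) ≤ C)
    (hconv : ∀ p ∈ P, Filter.Tendsto (fun n => pFav T α p (u n)) Filter.atTop (𝓝 0)) :
    ∀ t₀ > (0:ℝ), ∀ p ∈ P, ∀ ε > (0:ℝ), ∃ N : ℕ, ∀ n ≥ N, ∀ t ∈ Set.Icc (0:ℝ) t₀,
      pFav T α p (T t (u n)) < ε := by
  intro t₀ ht₀ p hp ε hε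
  by_contra hcon
  push_neg at hcon
  choose n hn t ht hεle using hcon
  have key : ∀ k : ℕ, ∃ s > (0:ℝ),
      ε/2 < p (T (t k) (T s (u (n k)) - u (n k))) / s ^ α := by
    intro k
    have hne : ((fun s : ℝ => p (T s (T (t k) (u (n k))) - T (t k) (u (n k))) / s ^ α)
        '' Set.Ioi 0).Nonempty := ⟨_, ⟨1, Set.mem_Ioi.mpr one_pos, rfl⟩⟩
    have hlt : ε/2 < pFav T α p (T (t k) (u (n k))) :=
      lt_of_lt_of_le (by linarith) (hεle k)
    rw [pFav] at hlt
    obtain ⟨v, ⟨s, hs, rfl⟩, hv⟩ := exists_lt_of_lt_csSup hne hlt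
    have hs0 : (0:ℝ) < s := hs
    refine ⟨s, hs0, ?_⟩
    have h1 : T s (T (t k) (u (n k))) = T (t k) (T s (u (n k))) := by
      have e1 := hTsg (t k) s (ht k).1 hs0.le
      have e2 := hTsg s (t k) hs0.le (ht k).1
      calc T s (T (t k) (u (n k))) = ((T s).comp (T (t k))) (u (n k)) := rfl
        _ = T (s + t k) (u (n k)) := by rw [← e1]
        _ = T (t k + s) (u (n k)) := by rw [add_comm]
        _ = T (t k) (T s (u (n k))) := by rw [e2]; rfl
    have heq : T s (T (t k) (u (n k))) - T (t k) (u (n k))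
        = T (t k) (T s (u (n k)) - u (n k)) := by rw [h1, map_sub]
    simp only [heq] at hv
    exact hv
  choose s hs hsp using key
  set w : ℕ → X := fun k => (s k ^ α)⁻¹ • (T (s k) (u (n k)) - u (n k)) with hw
  have hspos : ∀ k, (0:ℝ) < s k ^ α := fun k => Real.rpow_pos_of_pos (hs k) α
  have hwnorm : ∀ k, ‖w k‖ = ‖T (s k) (u (n k)) - u (n k)‖ / s k ^ α := by
    intro k
    rw [hw]
    simp only [norm_smul, Real.norm_eq_abs, abs_inv, abs_of_pos (hspos k)]
    rw [inv_mul_eq_div]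
  have hwC : ∀ k, ‖w k‖ ≤ C := by
    intro k
    rw [hwnorm k]
    refine le_trans (le_csSup (huF (n k)) ⟨s k, Set.mem_Ioi.mpr (hs k), rfl⟩) ?_
    exact hC (n k)
  have hntop : Filter.Tendsto n Filter.atTop Filter.atTop :=
    Filter.tendsto_atTop_mono hn Filter.tendsto_id
  have hwtend : ∀ q ∈ P, Filter.Tendsto (fun k => q (w k)) Filter.atTop (𝓝 0) := by
    intro q hq
    have hb : ∀ k, q (w k) ≤ pFav T α q (u (n k)) := by
      intro k
      have hval : q (w k) = q (T (s k) (u (n k)) - u (n k)) / s k ^ α := by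
        rw [hw]
        simp only [map_smul_eq_mul, Real.norm_eq_abs, abs_inv, abs_of_pos (hspos k)]
        rw [inv_mul_eq_div]
      rw [hval]
      have hbdd : BddAbove ((fun τ : ℝ => q (T τ (u (n k)) - u (n k)) / τ ^ α)
          '' Set.Ioi 0) := by
        refine ⟨favNorm T α (u (n k)), ?_⟩
        rintro v ⟨τ, hτ, rfl⟩
        have hτα : (0:ℝ) < τ ^ α := Real.rpow_pos_of_pos hτ α
        have h1 : q (T τ (u (n k)) - u (n k)) / τ ^ α
            ≤ ‖T τ (u (n k)) - u (n k)‖ / τ ^ α := by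
          gcongr
          exact p_le_norm' P hnorm hq _
        exact le_trans h1 (le_csSup (huF (n k)) ⟨τ, hτ, rfl⟩)
      exact le_csSup hbdd ⟨s k, Set.mem_Ioi.mpr (hs k), rfl⟩
    have htendsub : Filter.Tendsto (fun k => pFav T α q (u (n k)))
        Filter.atTop (𝓝 0) := (hconv q hq).comp hntop
    exact squeeze_zero (fun k => apply_nonneg q (w k)) hb htendsub
  obtain ⟨N, hN⟩ := hbieq w C hwC hwtend t₀ ht₀ p hp (ε/2) (half_pos hε)
  have hlt := hN N le_rfl (t N) (ht N)
  have hgt := hsp N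
  have hTw : p (T (t N) (w N))
      = p (T (t N) (T (s N) (u (n N)) - u (n N))) / s N ^ α := by
    rw [hw]
    simp only [map_smul, map_smul_eq_mul, Real.norm_eq_abs, abs_inv,
      abs_of_pos (hspos N)]
    rw [inv_mul_eq_div]
  rw [hTw] at hlt
  linarith
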